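/- Let k1, k2 ≥ 1 and let C1, C2 : Matrix (Fin k1) (Fin k2) ℝ satisfy B_{k1} * (C2 − C1) * (B_{k2})ᵀ = 0. Then for every λ ∈ ℝ, the matrix P defined by P i j = C1 i j + (C2 (k1−1) j − C1 (k1−1) j) + λ (where k1−1 denotes the last row index) is a potential function of the bi-matrix game (C1, C2). -/

import Mathlib

open Matrix

/-- The matrix `B_k = [I_{k-1}, -1_{k-1}]` of size `(k-1) × k`. -/
def Bmat (k : ℕ) : Matrix (Fin (k - 1)) (Fin k) ℝ :=
  Matrix.of fun i j => if (j : ℕ) = (i : ℕ) then 1 else if (j : ℕ) = k - 1 then -1 else 0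

lemma sumB {k : ℕ} (hk : 1 ≤ k) (i : Fin (k - 1)) (x : Fin k → ℝ) :
    ∑ a, Bmat k i a * x a = x ⟨i, by omega⟩ - x ⟨k - 1, by omega⟩ := by
  have hlt := i.isLt
  have : ∀ a : Fin k, Bmat k i a * x a =
      (if a = (⟨i, by omega⟩ : Fin k) then x a else 0) +
      (if a = (⟨k - 1, by omega⟩ : Fin k) then -x a else 0) := by
    intro a
    unfold Bmat
    simp only [Matrix.of_apply, Fin.ext_iff]
    split_ifs <;> simp_all <;> omega
  rw [Finset.sum_congr rfl (fun a _ => this a), Finset.sum_add_distrib]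
  rw [Finset.sum_ite_eq' Finset.univ, Finset.sum_ite_eq' Finset.univ]
  simp
  ring

lemma keylem {k1 k2 : ℕ} (hk1 : 1 ≤ k1) (hk2 : 1 ≤ k2) (D : Matrix (Fin k1) (Fin k2) ℝ)
    (h : Bmat k1 * D * (Bmat k2)ᵀ = 0) (i : Fin k1) (j : Fin k2) :
    D i j - D ⟨k1 - 1, Nat.sub_one_lt_of_le hk1 le_rfl⟩ j =
      D i ⟨k2 - 1, by omega⟩ - D ⟨k1 - 1, Nat.sub_one_lt_of_le hk1 le_rfl⟩ ⟨k2 - 1, by omega⟩ := by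
  by_cases hi : (i : ℕ) = k1 - 1
  · have : i = ⟨k1 - 1, Nat.sub_one_lt_of_le hk1 le_rfl⟩ := Fin.ext hi
    rw [this]; ring
  by_cases hj : (j : ℕ) = k2 - 1
  · have : j = ⟨k2 - 1, by omega⟩ := Fin.ext hj
    rw [this]
  have hi' : (i : ℕ) < k1 - 1 := by omega
  have hj' : (j : ℕ) < k2 - 1 := by omega
  have h0 := congrFun (congrFun h ⟨i, hi'⟩) ⟨j, hj'⟩
  simp only [Matrix.mul_apply, Matrix.transpose_apply, Matrix.zero_apply] at h0
  rw [Finset.sum_congr rfl (fun b _ => by rw [sumB hk1, mul_comm])] at h0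
  rw [sumB hk2 ⟨j, hj'⟩
    (fun b => D ⟨(⟨i, hi'⟩ : Fin (k1-1)), by omega⟩ b - D ⟨k1 - 1, Nat.sub_one_lt_of_le hk1 le_rfl⟩ b)] at h0
  have hii : i = ⟨(i : ℕ), by omega⟩ := Fin.ext rfl
  have hjj : j = ⟨(j : ℕ), by omega⟩ := Fin.ext rfl
  rw [hii, hjj]
  simp only at h0
  linarith

theorem stmt1 (k1 k2 : ℕ) (hk1 : 1 ≤ k1) (hk2 : 1 ≤ k2)
    (C1 C2 : Matrix (Fin k1) (Fin k2) ℝ)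
    (h : Bmat k1 * (C2 - C1) * (Bmat k2)ᵀ = 0)
    (lam : ℝ) (P : Matrix (Fin k1) (Fin k2) ℝ)
    (hP : ∀ (i : Fin k1) (j : Fin k2),
      P i j = C1 i j + (C2 ⟨k1 - 1, by omega⟩ j - C1 ⟨k1 - 1, by omega⟩ j) + lam) :
    (∀ i i' : Fin k1, ∀ j : Fin k2, C1 i j - C1 i' j = P i j - P i' j) ∧
    (∀ i : Fin k1, ∀ j j' : Fin k2, C2 i j - C2 i j' = P i j - P i j') := by
  constructor
  · intro i i' j; rw [hP, hP]; ring
  · intro i j j'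
    rw [hP, hP]
    have h1 := keylem hk1 hk2 (C2 - C1) h i j
    have h2 := keylem hk1 hk2 (C2 - C1) h i j'
    simp only [Matrix.sub_apply] at h1 h2
    linarith
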